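/- Let n be an odd positive integer and let X be a finite set of cardinality n with a transitive action of DihedralGroup n. Then: (1) for every i : ZMod n, the reflection sr i fixes exactly one point of X; and (2) for every i : ZMod n with i ≠ 0, the rotation r i fixes no point of X. -/

import Mathlib

open DihedralGroup

private lemma card_two_unique {H : Type*} [Group H] [Finite H]
    (h : Nat.card H = 2) {a b : H} (ha : a ≠ 1) (hb : b ≠ 1) : a = b := by
  by_contra hab
  have hinj : Function.Injective (![1, a, b] : Fin 3 → H) := by
    intro x y hxy
    fin_cases x <;> fin_cases y <;>
      simp_all [Matrix.cons_val_zero, Matrix.cons_val_one]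
  have := Nat.card_le_card_of_injective _ hinj
  simp [h] at this

/-- For `n` odd and a transitive action of the dihedral group of order `2n` on a
set of cardinality `n`: every reflection `sr i` fixes exactly one point, and
every nontrivial rotation `r i` fixes no point. -/
theorem dihedral_odd_transitive_action_fixed_points
    (n : ℕ) (hn : 0 < n) (hodd : Odd n)
    (X : Type*) [Finite X] [MulAction (DihedralGroup n) X]
    [MulAction.IsPretransitive (DihedralGroup n) X]
    (hX : Nat.card X = n) :
    (∀ i : ZMod n, ∃! x : X, sr i • x = x) ∧
    (∀ i : ZMod n, i ≠ 0 → ∀ x : X, r i • x ≠ x) := by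
  haveI : NeZero n := ⟨hn.ne'⟩
  haveI : Nonempty X := by
    have : 0 < Nat.card X := hX ▸ hn
    exact (Nat.card_pos_iff.mp this).1
  -- 2 is a unit mod n
  have h2 : IsUnit (2 : ZMod n) := by
    have : IsUnit ((2 : ℕ) : ZMod n) :=
      (ZMod.isUnit_iff_coprime 2 n).mpr hodd.coprime_two_left
    simpa using this
  obtain ⟨u, hu⟩ := h2
  have hu2 : (↑u⁻¹ : ZMod n) * 2 = 1 := by rw [← hu]; exact u.inv_mul
  have htwo : ∀ i : ZMod n, 2 * i = 0 → i = 0 := by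
    intro i hi
    calc i = ↑u⁻¹ * 2 * i := by rw [hu2, one_mul]
      _ = ↑u⁻¹ * (2 * i) := by ring
      _ = 0 := by rw [hi, mul_zero]
  -- card of the group
  have hcardG : Nat.card (DihedralGroup n) = 2 * n := by
    simp [Nat.card_eq_fintype_card, DihedralGroup.card]
  -- stabilizers have cardinality 2
  have hstab : ∀ x : X, Nat.card (MulAction.stabilizer (DihedralGroup n) x) = 2 := by
    intro x
    have h1 := Subgroup.card_eq_card_quotient_mul_card_subgroup
      (MulAction.stabilizer (DihedralGroup n) x)
    have horb : Nat.card (DihedralGroup n ⧸ MulAction.stabilizer (DihedralGroup n) x) = n := by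
      rw [← Nat.card_congr (MulAction.orbitEquivQuotientStabilizer (DihedralGroup n) x)]
      rw [MulAction.orbit_eq_univ]
      simpa using hX
    rw [hcardG, horb] at h1
    have h2' : n * Nat.card (MulAction.stabilizer (DihedralGroup n) x) = n * 2 := by
      rw [← h1]; ring
    exact Nat.eq_of_mul_eq_mul_left hn h2'
  -- elements of stabilizers square to one
  have hsq : ∀ (x : X) (g : DihedralGroup n),
      g ∈ MulAction.stabilizer (DihedralGroup n) x → g ^ 2 = 1 := by
    intro x g hg
    have := Subgroup.orderOf_dvd_natCard _ hg
    rw [hstab x] at this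
    exact orderOf_dvd_iff_pow_eq_one.mp this
  -- rotations part
  have hrot : ∀ i : ZMod n, i ≠ 0 → ∀ x : X, r i • x ≠ x := by
    intro i hi x hfix
    have hg : r i ∈ MulAction.stabilizer (DihedralGroup n) x := hfix
    have := hsq x _ hg
    have h2i : r (i + i) = (1 : DihedralGroup n) := by
      rw [← this]; rw [pow_two, r_mul_r]
    rw [one_def] at h2i
    have : i + i = 0 := by injection h2i
    exact hi (htwo i (by rw [two_mul]; exact this))
  refine ⟨?_, hrot⟩
  -- every point is fixed by some reflection
  have hpoint : ∀ x : X, ∃ j : ZMod n, sr j • x = x := by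
    intro x
    haveI : Nontrivial (MulAction.stabilizer (DihedralGroup n) x) :=
      Finite.one_lt_card_iff_nontrivial.mp (by rw [hstab x]; norm_num)
    obtain ⟨a, ha⟩ := exists_ne (1 : MulAction.stabilizer (DihedralGroup n) x)
    have ha1 : (a : DihedralGroup n) ≠ 1 := fun h => ha (Subtype.ext h)
    have hamem : (a : DihedralGroup n) • x = x := a.2
    rcases ha' : (a : DihedralGroup n) with j | j
    · -- a rotation: contradiction unless trivial
      exfalso
      rw [ha'] at hamem ha1
      rcases eq_or_ne j 0 with hj | hj
      · exact ha1 (by rw [hj]; rfl)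
      · exact hrot j hj x hamem
    · rw [ha'] at hamem
      exact ⟨j, hamem⟩
  intro i
  -- existence
  have hsr_ne_one : ∀ j : ZMod n, sr j ≠ (1 : DihedralGroup n) := by
    intro j h; rw [one_def] at h; cases h
  obtain ⟨x₀⟩ := ‹Nonempty X›
  obtain ⟨j, hj⟩ := hpoint x₀
  -- conjugate sr j to sr i : r k * sr j * (r k)⁻¹ = sr (j - 2*k); choose 2k = j - i
  set k : ZMod n := ↑u⁻¹ * (j - i) with hk
  have h2k : 2 * k = j - i := by
    rw [hk, ← mul_assoc, mul_comm (2 : ZMod n), hu2, one_mul]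
  have hconj : r k * sr j * (r k)⁻¹ = sr i := by
    have : (r k)⁻¹ = r (-k) := rfl
    rw [this, r_mul_sr, sr_mul_r]
    congr 1
    linear_combination -h2k
  refine ⟨r k • x₀, ?_, ?_⟩
  · rw [← hconj]
    simp only [mul_smul]
    have : (r k)⁻¹ • r k • x₀ = x₀ := by rw [← mul_smul, inv_mul_cancel, one_smul]
    rw [this, hj]
  · -- uniqueness
    intro y hy
    show y = r k • x₀
    set x : X := r k • x₀ with hx
    have hxfix : sr i • x = x := by
      rw [hx, ← hconj]
      simp only [mul_smul]
      have : (r k)⁻¹ • r k • x₀ = x₀ := by rw [← mul_smul, inv_mul_cancel, one_smul]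
      rw [this, hj]
    obtain ⟨g, hg⟩ := MulAction.exists_smul_eq (DihedralGroup n) x y
    -- g⁻¹ * sr i * g stabilizes x
    have hmem1 : sr i ∈ MulAction.stabilizer (DihedralGroup n) x := hxfix
    have hmem2 : g⁻¹ * sr i * g ∈ MulAction.stabilizer (DihedralGroup n) x := by
      show (g⁻¹ * sr i * g) • x = x
      rw [mul_smul, mul_smul, hg, hy, ← hg, ← mul_smul, inv_mul_cancel, one_smul]
    have hne2 : g⁻¹ * sr i * g ≠ 1 := by
      intro h
      apply hsr_ne_one i
      have : sr i = g * 1 * g⁻¹ := by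
        rw [← h]; group
      simpa using this
    have : (⟨sr i, hmem1⟩ : MulAction.stabilizer (DihedralGroup n) x)
        = ⟨g⁻¹ * sr i * g, hmem2⟩ := by
      haveI : Finite (MulAction.stabilizer (DihedralGroup n) x) := inferInstance
      exact card_two_unique (hstab x)
        (by simpa [Subtype.ext_iff] using hsr_ne_one i)
        (by simpa [Subtype.ext_iff] using hne2)
    have hcomm : sr i = g⁻¹ * sr i * g := by
      exact congrArg Subtype.val this
    -- so g commutes with sr i; centralizer of sr i is {1, sr i}
    have hgc : g * sr i = sr i * g := by
      have := hcomm
      calc g * sr i = g * (g⁻¹ * sr i * g) := by rw [← hcomm]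
        _ = sr i * g := by group
    have : g = 1 ∨ g = sr i := by
      obtain ⟨m⟩ | ⟨m⟩ := g
      · left
        rw [r_mul_sr, sr_mul_r] at hgc
        have h' : i - m = i + m := by injection hgc
        have : 2 * m = 0 := by linear_combination -h'
        rw [htwo m this]; rfl
      · right
        rw [sr_mul_sr, sr_mul_sr] at hgc
        have h' : i - m = m - i := by injection hgc
        have : 2 * m = 2 * i := by linear_combination -h'
        have : 2 * (m - i) = 0 := by linear_combination this
        have := htwo _ this
        congr 1
        linear_combination this
    rcases this with h | h
    · rw [h, one_smul] at hg; exact hg.symm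
    · rw [h, hxfix] at hg; exact hg.symm
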